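/- Let φ: M_n → M_m be a positive linear map. Then φ is a generalized Schwarz map if and only if for every pair (K, X) ∈ M_m × M_m⁺ with ker(X) ⊆ ker(K*), the tracial inequality Tr[φ*(K* X⁺ K)] ≥ Tr[φ*(K)* φ*(X)⁺ φ*(K)] holds. -/

import Mathlib

open Matrix ComplexOrder

/-- `B` is the Moore–Penrose pseudoinverse of `A`. -/
def IsMoorePenroseInv {m : Type*} [Fintype m]
    (A B : Matrix m m ℂ) : Prop :=
  A * B * A = A ∧ B * A * B = B ∧ (A * B)ᴴ = A * B ∧ (B * A)ᴴ = B * A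

/-- `φ` is a generalized Schwarz map. -/
def IsGenSchwarz {n m : ℕ}
    (φ : Matrix (Fin n) (Fin n) ℂ →ₗ[ℂ] Matrix (Fin m) (Fin m) ℂ) : Prop :=
  ∀ K : Matrix (Fin n) (Fin n) ℂ,
    (Matrix.fromBlocks (φ 1) (φ K) (φ K)ᴴ (φ (Kᴴ * K))).PosSemidef

namespace SchwarzAux

set_option linter.unusedSectionVars false
set_option maxHeartbeats 1000000

variable {k : Type*} [Fintype k] [DecidableEq k]




open scoped MatrixOrder in
lemma psd_eq_conjTranspose_mul_self {M : Matrix k k ℂ} (hM : M.PosSemidef) :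
    ∃ B : Matrix k k ℂ, M = Bᴴ * B := by
  obtain ⟨B, hB⟩ := CStarAlgebra.nonneg_iff_eq_star_mul_self.mp hM.nonneg
  exact ⟨B, hB⟩

/-- trace of a PSD matrix is nonneg (as a complex number). -/
lemma trace_psd_nonneg {M : Matrix k k ℂ} (hM : M.PosSemidef) : 0 ≤ M.trace := by
  rw [Matrix.trace]
  refine Finset.sum_nonneg fun i _ => ?_
  have := hM.dotProduct_mulVec_nonneg (Pi.single i 1)
  simpa [Matrix.mulVec_single, dotProduct, Pi.single_apply] using this

lemma trace_mul_psd_nonneg {M Q : Matrix k k ℂ} (hM : M.PosSemidef) (hQ : Q.PosSemidef) :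
    0 ≤ (M * Q).trace := by
  obtain ⟨A, rfl⟩ := psd_eq_conjTranspose_mul_self hM
  obtain ⟨B, rfl⟩ := psd_eq_conjTranspose_mul_self hQ
  have h : (Aᴴ * A * (Bᴴ * B)).trace = ((A * Bᴴ)ᴴ * (A * Bᴴ)).trace := by
    rw [conjTranspose_mul, conjTranspose_conjTranspose]
    rw [show Aᴴ * A * (Bᴴ * B) = (Aᴴ * A * Bᴴ) * B by noncomm_ring]
    rw [Matrix.trace_mul_comm]
    noncomm_ring
  rw [h]
  exact trace_psd_nonneg (posSemidef_conjTranspose_mul_self _)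





lemma trace_mul_vecMulVec (M : Matrix k k ℂ) (x y : k → ℂ) :
    (M * vecMulVec y (star x)).trace = star x ⬝ᵥ (M *ᵥ y) := by
  simp only [Matrix.trace, Matrix.diag_apply, Matrix.mul_apply, vecMulVec_apply,
    dotProduct, Matrix.mulVec, Pi.star_apply]
  congr 1; ext i
  rw [Finset.mul_sum]
  congr 1; ext j
  ring

lemma eq_of_forall_trace_mul_eq {M N : Matrix k k ℂ}
    (h : ∀ B : Matrix k k ℂ, (M * B).trace = (N * B).trace) : M = N := by
  ext i j
  have := h (vecMulVec (Pi.single j 1) (star (Pi.single i 1)))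
  rw [trace_mul_vecMulVec, trace_mul_vecMulVec] at this
  simpa [dotProduct, Matrix.mulVec_single, Pi.single_apply] using this

lemma mp_unique {A B C : Matrix k k ℂ}
    (hB : IsMoorePenroseInv A B) (hC : IsMoorePenroseInv A C) : B = C := by
  obtain ⟨b1, b2, b3, b4⟩ := hB
  obtain ⟨c1, c2, c3, c4⟩ := hC
  -- B = B * A * C
  have hB' : B = B * A * C := by
    have h1 : B = B * Bᴴ * Aᴴ := by
      calc B = B * (A * B) := by rw [← Matrix.mul_assoc, b2]
        _ = B * (A * B)ᴴ := by rw [b3]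
        _ = B * Bᴴ * Aᴴ := by rw [conjTranspose_mul, Matrix.mul_assoc]
    have h2 : Aᴴ = Aᴴ * (A * C) := by
      calc Aᴴ = (A * C * A)ᴴ := by rw [c1]
        _ = Aᴴ * (A * C)ᴴ := by rw [conjTranspose_mul]
        _ = Aᴴ * (A * C) := by rw [c3]
    calc B = B * Bᴴ * Aᴴ := h1
      _ = B * Bᴴ * (Aᴴ * (A * C)) := by rw [← h2]
      _ = (B * Bᴴ * Aᴴ) * (A * C) := by noncomm_ring
      _ = B * (A * C) := by rw [← h1]
      _ = B * A * C := by rw [Matrix.mul_assoc]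
  have hC' : C = B * A * C := by
    have h1 : C = Aᴴ * Cᴴ * C := by
      calc C = (C * A) * C := by rw [c2]
        _ = (C * A)ᴴ * C := by rw [c4]
        _ = Aᴴ * Cᴴ * C := by rw [conjTranspose_mul]
    have h2 : Aᴴ = (B * A) * Aᴴ := by
      calc Aᴴ = (A * B * A)ᴴ := by rw [b1]
        _ = (B * A)ᴴ * Aᴴ := by rw [Matrix.mul_assoc, conjTranspose_mul]
        _ = (B * A) * Aᴴ := by rw [b4]
    calc C = Aᴴ * Cᴴ * C := h1
      _ = ((B * A) * Aᴴ) * Cᴴ * C := by rw [← h2]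
      _ = (B * A) * (Aᴴ * Cᴴ * C) := by noncomm_ring
      _ = (B * A) * C := by rw [← h1]
      _ = B * A * C := by rw [Matrix.mul_assoc]
  rw [hB', ← hC']

lemma mp_conjTranspose {A B : Matrix k k ℂ} (hA : A.IsHermitian)
    (hB : IsMoorePenroseInv A B) : Bᴴ = B := by
  obtain ⟨b1, b2, b3, b4⟩ := hB
  have hBH : IsMoorePenroseInv A Bᴴ := by
    refine ⟨?_, ?_, ?_, ?_⟩
    · calc A * Bᴴ * A = (Aᴴ * B * Aᴴ)ᴴ := by
            simp [conjTranspose_mul, Matrix.mul_assoc]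
        _ = (A * B * A)ᴴ := by rw [hA.eq]
        _ = A := by rw [b1, hA.eq]
    · calc Bᴴ * A * Bᴴ = (B * Aᴴ * B)ᴴ := by
            simp [conjTranspose_mul, Matrix.mul_assoc]
        _ = (B * A * B)ᴴ := by rw [hA.eq]
        _ = Bᴴ := by rw [b2]
    · calc (A * Bᴴ)ᴴ = B * Aᴴ := by rw [conjTranspose_mul, conjTranspose_conjTranspose]
        _ = B * A := by rw [hA.eq]
        _ = (B * A)ᴴ := by rw [b4]
        _ = Aᴴ * Bᴴ := by rw [conjTranspose_mul]
        _ = A * Bᴴ := by rw [hA.eq]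
    · calc (Bᴴ * A)ᴴ = Aᴴ * B := by rw [conjTranspose_mul, conjTranspose_conjTranspose]
        _ = A * B := by rw [hA.eq]
        _ = (A * B)ᴴ := by rw [b3]
        _ = Bᴴ * Aᴴ := by rw [conjTranspose_mul]
        _ = Bᴴ * A := by rw [hA.eq]
  exact mp_unique hBH ⟨b1, b2, b3, b4⟩






lemma sandwich (U : Matrix.unitaryGroup k ℂ) (d₁ d₂ : k → ℂ) :
    ((U : Matrix k k ℂ) * diagonal d₁ * star (U : Matrix k k ℂ)) *
      ((U : Matrix k k ℂ) * diagonal d₂ * star (U : Matrix k k ℂ)) =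
    (U : Matrix k k ℂ) * diagonal (fun i => d₁ i * d₂ i) * star (U : Matrix k k ℂ) := by
  have h : star (U : Matrix k k ℂ) * (U : Matrix k k ℂ) = 1 :=
    Matrix.mem_unitaryGroup_iff'.mp U.2
  calc (U : Matrix k k ℂ) * diagonal d₁ * star (U : Matrix k k ℂ) *
        ((U : Matrix k k ℂ) * diagonal d₂ * star (U : Matrix k k ℂ))
      = (U : Matrix k k ℂ) * diagonal d₁ * (star (U : Matrix k k ℂ) * (U : Matrix k k ℂ)) *
        diagonal d₂ * star (U : Matrix k k ℂ) := by noncomm_ring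
    _ = (U : Matrix k k ℂ) * (diagonal d₁ * diagonal d₂) * star (U : Matrix k k ℂ) := by
        rw [h]; noncomm_ring
    _ = (U : Matrix k k ℂ) * diagonal (fun i => d₁ i * d₂ i) * star (U : Matrix k k ℂ) := by
        rw [diagonal_mul_diagonal]

lemma usand_psd (U : Matrix.unitaryGroup k ℂ) {d : k → ℝ} (hd : ∀ i, 0 ≤ d i) :
    ((U : Matrix k k ℂ) * diagonal (fun i => (d i : ℂ)) * star (U : Matrix k k ℂ)).PosSemidef := by
  rw [Matrix.star_eq_conjTranspose]
  refine PosSemidef.mul_mul_conjTranspose_same ?_ _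
  refine posSemidef_diagonal_iff.mpr fun i => ?_
  exact_mod_cast Complex.zero_le_real.mpr (hd i)

lemma usand_herm (U : Matrix.unitaryGroup k ℂ) (d : k → ℝ) :
    ((U : Matrix k k ℂ) * diagonal (fun i => (d i : ℂ)) * star (U : Matrix k k ℂ)).IsHermitian := by
  rw [Matrix.star_eq_conjTranspose]
  apply Matrix.isHermitian_mul_mul_conjTranspose
  refine Matrix.isHermitian_diagonal_iff.mpr fun i => ?_
  exact Complex.conj_ofReal (d i)

/-- Hermitian matrices are differences of PSD matrices. -/
lemma exists_psd_sub {H : Matrix k k ℂ} (hH : H.IsHermitian) :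
    ∃ P Q : Matrix k k ℂ, P.PosSemidef ∧ Q.PosSemidef ∧ H = P - Q := by
  set U := hH.eigenvectorUnitary
  set e := hH.eigenvalues
  refine ⟨(U : Matrix k k ℂ) * diagonal (fun i => ((max (e i) 0 : ℝ) : ℂ)) * star (U : Matrix k k ℂ),
    (U : Matrix k k ℂ) * diagonal (fun i => ((max (-e i) 0 : ℝ) : ℂ)) * star (U : Matrix k k ℂ),
    usand_psd U (fun i => le_max_right _ _), usand_psd U (fun i => le_max_right _ _), ?_⟩
  have hfun : (fun i => ((max (e i) 0 : ℝ) : ℂ) - ((max (-e i) 0 : ℝ) : ℂ))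
      = fun i => ((e i : ℝ) : ℂ) := by
    funext i
    rw [← Complex.ofReal_sub, max_zero_sub_max_neg_zero_eq_self]
  have hd : diagonal (fun i => ((max (e i) 0 : ℝ) : ℂ)) - diagonal (fun i => ((max (-e i) 0 : ℝ) : ℂ))
      = diagonal (fun i => ((e i : ℝ) : ℂ)) := by
    rw [diagonal_sub, hfun]
  rw [← Matrix.sub_mul, ← Matrix.mul_sub, hd]
  exact hH.spectral_theorem

/-- Every PSD matrix has a PSD Moore-Penrose inverse. -/
lemma exists_mp {M : Matrix k k ℂ} (hM : M.PosSemidef) :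
    ∃ Mp : Matrix k k ℂ, IsMoorePenroseInv M Mp ∧ Mp.PosSemidef := by
  set U := hM.1.eigenvectorUnitary
  set e := hM.1.eigenvalues
  have hspec : M = (U : Matrix k k ℂ) * diagonal (fun i => ((e i : ℝ) : ℂ)) * star (U : Matrix k k ℂ) :=
    hM.1.spectral_theorem
  set Mp : Matrix k k ℂ :=
    (U : Matrix k k ℂ) * diagonal (fun i => (((e i)⁻¹ : ℝ) : ℂ)) * star (U : Matrix k k ℂ) with hMp
  have hinv : (fun i => ((e i : ℝ) : ℂ) * (((e i)⁻¹ : ℝ) : ℂ) * ((e i : ℝ) : ℂ))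
      = fun i => ((e i : ℝ) : ℂ) := by
    funext i
    rcases eq_or_ne (e i) 0 with h | h
    · simp [h]
    · push_cast
      field_simp
  have hinv2 : (fun i => (((e i)⁻¹ : ℝ) : ℂ) * ((e i : ℝ) : ℂ) * (((e i)⁻¹ : ℝ) : ℂ))
      = fun i => (((e i)⁻¹ : ℝ) : ℂ) := by
    funext i
    rcases eq_or_ne (e i) 0 with h | h
    · simp [h]
    · push_cast
      field_simp
  refine ⟨Mp, ⟨?_, ?_, ?_, ?_⟩, ?_⟩
  · rw [hspec, hMp, sandwich, sandwich, hinv]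
  · rw [hspec, hMp, sandwich, sandwich, hinv2]
  · rw [hspec, hMp, sandwich]
    have h3 : (fun i => ((e i : ℝ) : ℂ) * (((e i)⁻¹ : ℝ) : ℂ))
        = fun i => ((e i * (e i)⁻¹ : ℝ) : ℂ) := by
      funext i; rw [Complex.ofReal_mul]
    rw [h3]
    exact usand_herm U _
  · rw [hspec, hMp, sandwich]
    have h4 : (fun i => (((e i)⁻¹ : ℝ) : ℂ) * ((e i : ℝ) : ℂ))
        = fun i => (((e i)⁻¹ * e i : ℝ) : ℂ) := by
      funext i; rw [Complex.ofReal_mul]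
    rw [h4]
    exact usand_herm U _
  · exact usand_psd U (fun i => inv_nonneg.mpr (hM.eigenvalues_nonneg i))

/-- Any PSD matrix is dominated by a real multiple of the identity. -/
lemma exists_smul_one_sub_psd {P : Matrix k k ℂ} (hP : P.PosSemidef) :
    ∃ c : ℝ, (((c : ℂ) • 1 : Matrix k k ℂ) - P).PosSemidef := by
  set U := hP.1.eigenvectorUnitary
  set e := hP.1.eigenvalues
  set c : ℝ := ∑ i, e i with hc
  have hspec : P = (U : Matrix k k ℂ) * diagonal (fun i => ((e i : ℝ) : ℂ)) * star (U : Matrix k k ℂ) :=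
    hP.1.spectral_theorem
  have hU : (U : Matrix k k ℂ) * star (U : Matrix k k ℂ) = 1 :=
    Matrix.mem_unitaryGroup_iff.mp U.2
  refine ⟨c, ?_⟩
  have hone : (U : Matrix k k ℂ) * diagonal (fun _ => ((c : ℝ) : ℂ)) * star (U : Matrix k k ℂ)
      = ((c : ℂ) • 1 : Matrix k k ℂ) := by
    rw [← Matrix.smul_one_eq_diagonal, Matrix.mul_smul, Matrix.mul_one, Matrix.smul_mul, hU]
  rw [hspec, ← hone, ← Matrix.sub_mul, ← Matrix.mul_sub]
  have hfun : (fun i => ((c : ℝ) : ℂ) - ((e i : ℝ) : ℂ)) = fun i => ((c - e i : ℝ) : ℂ) := by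
    funext i
    rw [← Complex.ofReal_sub]
  have hd : diagonal (fun _ => ((c : ℝ) : ℂ)) - diagonal (fun i => ((e i : ℝ) : ℂ))
      = diagonal (fun i => ((c - e i : ℝ) : ℂ)) := by
    rw [diagonal_sub, hfun]
  rw [hd]
  exact usand_psd U (fun i => by
    rw [sub_nonneg, hc]
    exact Finset.single_le_sum (fun j _ => hP.eigenvalues_nonneg j) (Finset.mem_univ i))






lemma eq_zero_of_mulVec_eq_zero {M : Matrix k k ℂ} (h : ∀ y, M *ᵥ y = 0) : M = 0 := by
  ext i j
  have := congrFun (h (Pi.single j 1)) i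
  simpa [Matrix.mulVec_single] using this

/-- If `ker X ⊆ ker Kᴴ` then `X * Xp * K = K` for a Moore-Penrose inverse `Xp` of
Hermitian `X`. -/
lemma cancel {X Xp K : Matrix k k ℂ} (hX : X.IsHermitian)
    (hmp : IsMoorePenroseInv X Xp)
    (hker : ∀ y, X *ᵥ y = 0 → Kᴴ *ᵥ y = 0) : X * Xp * K = K := by
  obtain ⟨m1, m2, m3, m4⟩ := hmp
  have hXP : X * (X * Xp) = X := by
    calc X * (X * Xp) = ((X * Xp)ᴴ * Xᴴ)ᴴ := by
          rw [conjTranspose_mul, conjTranspose_conjTranspose, conjTranspose_conjTranspose]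
      _ = (X * Xp * X)ᴴ := by rw [m3, hX.eq]
      _ = X := by rw [m1, hX.eq]
  set R : Matrix k k ℂ := K - X * Xp * K with hR
  have hXR : X * R = 0 := by
    rw [hR, Matrix.mul_sub, ← Matrix.mul_assoc, hXP, sub_self]
  have hKR : Kᴴ * R = 0 := by
    apply eq_zero_of_mulVec_eq_zero
    intro y
    have h1 : X *ᵥ (R *ᵥ y) = 0 := by
      rw [Matrix.mulVec_mulVec, hXR, Matrix.zero_mulVec]
    have h2 := hker _ h1
    rw [Matrix.mulVec_mulVec] at h2
    exact h2
  have hRR : Rᴴ * R = 0 := by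
    have hRalt : R = (1 - X * Xp) * K := by
      rw [hR, Matrix.sub_mul, Matrix.one_mul]
    have hsq : (1 - X * Xp) * (1 - X * Xp) = 1 - X * Xp := by
      have : (X * Xp) * (X * Xp) = X * Xp := by
        calc (X * Xp) * (X * Xp) = (X * Xp * X) * Xp := by noncomm_ring
          _ = X * Xp := by rw [m1]
      rw [Matrix.sub_mul, Matrix.mul_sub, Matrix.mul_sub, this]
      noncomm_ring
    have hstep : Rᴴ * R = Kᴴ * ((1 - X * Xp)ᴴ * (1 - X * Xp)) * K := by
      rw [hRalt, conjTranspose_mul]; noncomm_ring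
    rw [hstep, conjTranspose_sub, conjTranspose_one, m3, hsq, Matrix.mul_assoc, ← hRalt]
    exact hKR
  have hR0 : K - X * Xp * K = 0 := by
    rw [← hR]; exact Matrix.conjTranspose_mul_self_eq_zero.mp hRR
  exact (sub_eq_zero.mp hR0).symm

lemma trace_fromBlocks {A : Matrix k k ℂ} {B : Matrix k k ℂ} {C : Matrix k k ℂ}
    {D : Matrix k k ℂ} :
    (fromBlocks A B C D).trace = A.trace + D.trace := by
  simp [Matrix.trace, Fintype.sum_sum_type, Matrix.fromBlocks_apply₁₁, Matrix.fromBlocks_apply₂₂]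

/-- The key PSD block matrix built from `X`, its pseudoinverse and `K`. -/
lemma block_psd {X Xp K : Matrix k k ℂ} (hX : X.PosSemidef)
    (h1 : Xp * X * Xp = Xp) (hXpH : Xpᴴ = Xp) (hc : X * Xp * K = K) :
    (fromBlocks (Kᴴ * Xp * K) (-Kᴴ) (-K) X).PosSemidef := by
  obtain ⟨B, hB⟩ := psd_eq_conjTranspose_mul_self hX
  set S : Matrix (k ⊕ k) (k ⊕ k) ℂ := fromBlocks (Xp * K) (-1) 0 0 with hS
  have hM0 : (fromBlocks X 0 0 0 : Matrix (k ⊕ k) (k ⊕ k) ℂ).PosSemidef := by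
    have : (fromBlocks X 0 0 0 : Matrix (k ⊕ k) (k ⊕ k) ℂ)
        = (fromBlocks B 0 0 0)ᴴ * fromBlocks B 0 0 0 := by
      rw [fromBlocks_conjTranspose, fromBlocks_multiply]
      simp [hB]
    rw [this]
    exact posSemidef_conjTranspose_mul_self _
  have key : fromBlocks (Kᴴ * Xp * K) (-Kᴴ) (-K) X
      = Sᴴ * fromBlocks X 0 0 0 * S := by
    rw [hS, fromBlocks_conjTranspose, fromBlocks_multiply, fromBlocks_multiply]
    have hKX : Kᴴ * Xp * X = Kᴴ := by
      have h := congrArg conjTranspose hc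
      rw [conjTranspose_mul, conjTranspose_mul, hXpH, hX.1.eq] at h
      rw [Matrix.mul_assoc]; exact h
    simp only [conjTranspose_zero, conjTranspose_neg, conjTranspose_one, conjTranspose_mul,
      hXpH, Matrix.mul_zero, Matrix.zero_mul, add_zero, zero_add, Matrix.neg_mul,
      Matrix.mul_neg, Matrix.mul_one, Matrix.one_mul, neg_neg]
    rw [hKX, ← Matrix.mul_assoc, ← Matrix.mul_assoc, hc]
  rw [key]
  exact hM0.conjTranspose_mul_mul_same S

lemma decomp (A : Matrix k k ℂ) :
    ∃ H₁ H₂ : Matrix k k ℂ, H₁.IsHermitian ∧ H₂.IsHermitian ∧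
      A = (2:ℂ)⁻¹ • H₁ - ((2:ℂ)⁻¹ * Complex.I) • H₂ ∧
      Aᴴ = (2:ℂ)⁻¹ • H₁ + ((2:ℂ)⁻¹ * Complex.I) • H₂ := by
  refine ⟨A + Aᴴ, Complex.I • (A - Aᴴ), ?_, ?_, ?_, ?_⟩
  · show (A + Aᴴ)ᴴ = A + Aᴴ
    rw [conjTranspose_add, conjTranspose_conjTranspose, add_comm]
  · show (Complex.I • (A - Aᴴ))ᴴ = Complex.I • (A - Aᴴ)
    rw [conjTranspose_smul, conjTranspose_sub, conjTranspose_conjTranspose]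
    simp only [Complex.star_def, Complex.conj_I, smul_sub, neg_smul, neg_sub_neg]
  · have hI : Complex.I • (Complex.I • (A - Aᴴ)) = -(A - Aᴴ) := by
      rw [smul_smul, Complex.I_mul_I, neg_one_smul]
    rw [mul_smul, hI]
    module
  · have hI : Complex.I • (Complex.I • (A - Aᴴ)) = -(A - Aᴴ) := by
      rw [smul_smul, Complex.I_mul_I, neg_one_smul]
    rw [mul_smul, hI]
    module


lemma vecMulVec_psd (v : k → ℂ) : (vecMulVec v (star v)).PosSemidef := by
  rw [show vecMulVec v (star v) = replicateCol (Fin 1) v * replicateRow (Fin 1) (star v) from vecMulVec_eq (Fin 1) v (star v),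
    ← conjTranspose_replicateCol]
  exact posSemidef_self_mul_conjTranspose _

namespace Maps

variable {n m : ℕ}
  (φ : Matrix (Fin n) (Fin n) ℂ →ₗ[ℂ] Matrix (Fin m) (Fin m) ℂ)
  (ψ : Matrix (Fin m) (Fin m) ℂ →ₗ[ℂ] Matrix (Fin n) (Fin n) ℂ)

/-- A Hermitian-preserving linear map preserves conjTranspose. -/
lemma conjT_preserving {k l : Type*} [Fintype k] [DecidableEq k] [Fintype l] [DecidableEq l]
    (T : Matrix k k ℂ →ₗ[ℂ] Matrix l l ℂ)
    (h : ∀ H : Matrix k k ℂ, H.IsHermitian → (T H).IsHermitian)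
    (A : Matrix k k ℂ) : T Aᴴ = (T A)ᴴ := by
  obtain ⟨H₁, H₂, h1, h2, hA, hAH⟩ := decomp A
  have e1 : (T H₁)ᴴ = T H₁ := h _ h1
  have e2 : (T H₂)ᴴ = T H₂ := h _ h2
  have s1 : (starRingEnd ℂ) ((2:ℂ)⁻¹) = (2:ℂ)⁻¹ := by
    simp [map_ofNat]
  have s2 : (starRingEnd ℂ) ((2:ℂ)⁻¹ * Complex.I) = -((2:ℂ)⁻¹ * Complex.I) := by
    simp [Complex.conj_I, map_ofNat]
  calc T Aᴴ = T ((2:ℂ)⁻¹ • H₁ + ((2:ℂ)⁻¹ * Complex.I) • H₂) := by rw [← hAH]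
    _ = (2:ℂ)⁻¹ • T H₁ + ((2:ℂ)⁻¹ * Complex.I) • T H₂ := by
        rw [map_add, LinearMap.map_smul, LinearMap.map_smul]
    _ = ((2:ℂ)⁻¹ • T H₁ - ((2:ℂ)⁻¹ * Complex.I) • T H₂)ᴴ := by
        rw [conjTranspose_sub, conjTranspose_smul, conjTranspose_smul, e1, e2,
          show star ((2:ℂ)⁻¹) = (starRingEnd ℂ) ((2:ℂ)⁻¹) from rfl,
          show star ((2:ℂ)⁻¹ * Complex.I) = (starRingEnd ℂ) ((2:ℂ)⁻¹ * Complex.I) from rfl,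
          s1, s2]
        module
    _ = (T A)ᴴ := by rw [hA, map_sub, LinearMap.map_smul, LinearMap.map_smul]

/-- A positive map sends Hermitian matrices to Hermitian matrices. -/
lemma herm_of_pos {k l : Type*} [Fintype k] [DecidableEq k] [Fintype l] [DecidableEq l]
    (T : Matrix k k ℂ →ₗ[ℂ] Matrix l l ℂ)
    (hpos : ∀ X : Matrix k k ℂ, X.PosSemidef → (T X).PosSemidef)
    {H : Matrix k k ℂ} (hH : H.IsHermitian) : (T H).IsHermitian := by
  obtain ⟨P, Q, hP, hQ, rfl⟩ := exists_psd_sub hH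
  rw [map_sub]
  exact (hP |> hpos _).1.sub (hQ |> hpos _).1

variable (hφ : ∀ X : Matrix (Fin n) (Fin n) ℂ, X.PosSemidef → (φ X).PosSemidef)
variable (hadj : ∀ (A : Matrix (Fin m) (Fin m) ℂ) (B : Matrix (Fin n) (Fin n) ℂ),
      (Aᴴ * φ B).trace = ((ψ A)ᴴ * B).trace)

include hφ in
lemma phi_conjT (A : Matrix (Fin n) (Fin n) ℂ) : φ Aᴴ = (φ A)ᴴ :=
  conjT_preserving φ (fun _ h => herm_of_pos φ hφ h) A

include hφ hadj in
lemma trace_psi_mul (A : Matrix (Fin m) (Fin m) ℂ) (B : Matrix (Fin n) (Fin n) ℂ) :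
    ((ψ A) * B).trace = (A * φ B).trace := by
  have h1 : ((ψ A) * B).trace = star (((ψ A) * B)ᴴ).trace := by
    rw [Matrix.trace_conjTranspose, star_star]
  rw [h1, conjTranspose_mul, Matrix.trace_mul_comm, ← hadj A Bᴴ,
    ← Matrix.trace_conjTranspose, conjTranspose_mul, conjTranspose_conjTranspose,
    phi_conjT φ hφ, conjTranspose_conjTranspose, Matrix.trace_mul_comm]

include hφ hadj in
lemma psi_conjT (A : Matrix (Fin m) (Fin m) ℂ) : ψ Aᴴ = (ψ A)ᴴ := by
  apply eq_of_forall_trace_mul_eq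
  intro B
  rw [trace_psi_mul φ ψ hφ hadj, hadj A B]

include hφ hadj in
lemma psi_pos {A : Matrix (Fin m) (Fin m) ℂ} (hA : A.PosSemidef) : (ψ A).PosSemidef := by
  refine Matrix.PosSemidef.of_dotProduct_mulVec_nonneg ?_ ?_
  · show (ψ A)ᴴ = ψ A
    rw [← psi_conjT φ ψ hφ hadj, hA.1.eq]
  · intro y
    have h1 : star y ⬝ᵥ (ψ A) *ᵥ y = ((ψ A) * vecMulVec y (star y)).trace :=
      (trace_mul_vecMulVec _ _ _).symm
    rw [h1, trace_psi_mul φ ψ hφ hadj]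
    exact trace_mul_psd_nonneg hA (hφ _ (vecMulVec_psd y))

include hφ hadj in
lemma psi_one_ker {y : Fin n → ℂ} (hy : (ψ 1) *ᵥ y = 0) (B : Matrix (Fin m) (Fin m) ℂ) :
    (ψ B) *ᵥ y = 0 := by
  have hPSD : ∀ A : Matrix (Fin m) (Fin m) ℂ, A.PosSemidef → (ψ A) *ᵥ y = 0 := by
    intro A hA
    obtain ⟨c, hcs⟩ := exists_smul_one_sub_psd hA
    have h1 : (ψ ((c:ℂ) • 1 - A)).PosSemidef := psi_pos φ ψ hφ hadj hcs
    have h2 : 0 ≤ star y ⬝ᵥ (ψ ((c:ℂ) • 1 - A)) *ᵥ y := h1.dotProduct_mulVec_nonneg y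
    rw [map_sub, LinearMap.map_smul, Matrix.sub_mulVec, Matrix.smul_mulVec, hy, smul_zero,
      zero_sub, dotProduct_neg] at h2
    have h3 : 0 ≤ star y ⬝ᵥ (ψ A) *ᵥ y := (psi_pos φ ψ hφ hadj hA).dotProduct_mulVec_nonneg y
    have h2' : star y ⬝ᵥ (ψ A) *ᵥ y ≤ 0 := neg_nonneg.mp h2
    have h4 : star y ⬝ᵥ (ψ A) *ᵥ y = 0 := le_antisymm h2' h3
    exact ((psi_pos φ ψ hφ hadj hA).dotProduct_mulVec_zero_iff y).mp h4
  have hHerm : ∀ H : Matrix (Fin m) (Fin m) ℂ, H.IsHermitian → (ψ H) *ᵥ y = 0 := by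
    intro H hH
    obtain ⟨P, Q, hP, hQ, rfl⟩ := exists_psd_sub hH
    rw [map_sub, Matrix.sub_mulVec, hPSD _ hP, hPSD _ hQ, sub_zero]
  obtain ⟨H₁, H₂, h1, h2, hB, _⟩ := decomp B
  rw [hB, map_sub, LinearMap.map_smul, LinearMap.map_smul, Matrix.sub_mulVec, Matrix.smul_mulVec,
    Matrix.smul_mulVec, hHerm _ h1, hHerm _ h2, smul_zero, smul_zero, sub_zero]

include hφ hadj in
lemma core (hS : IsGenSchwarz φ)
    {K X Xp : Matrix (Fin m) (Fin m) ℂ} (hX : X.PosSemidef)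
    (hmp : IsMoorePenroseInv X Xp) (hXpH : Xpᴴ = Xp) (hc : X * Xp * K = K)
    (Z : Matrix (Fin n) (Fin n) ℂ) :
    2 * ((ψ K)ᴴ * Z).trace.re ≤
      (ψ (Kᴴ * Xp * K)).trace.re + (Zᴴ * (ψ X) * Z).trace.re := by
  have hQ : (fromBlocks (Kᴴ * Xp * K) (-Kᴴ) (-K) X).PosSemidef :=
    block_psd hX hmp.2.1 hXpH hc
  have hM : (fromBlocks (φ 1) (φ Zᴴ) (φ Zᴴ)ᴴ (φ (Z * Zᴴ))).PosSemidef := by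
    have := hS Zᴴ
    rwa [conjTranspose_conjTranspose] at this
  have h0 : 0 ≤ ((fromBlocks (φ 1) (φ Zᴴ) (φ Zᴴ)ᴴ (φ (Z * Zᴴ)) :
      Matrix (Fin m ⊕ Fin m) (Fin m ⊕ Fin m) ℂ) *
      fromBlocks (Kᴴ * Xp * K) (-Kᴴ) (-K) X).trace :=
    trace_mul_psd_nonneg hM hQ
  rw [fromBlocks_multiply, trace_fromBlocks] at h0
  have hre := (Complex.le_def.mp h0).1
  rw [Complex.zero_re] at hre
  -- identities
  have tA : (φ 1 * (Kᴴ * Xp * K)).trace = star ((ψ (Kᴴ * Xp * K)).trace) := by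
    have hherm : (Kᴴ * Xp * K)ᴴ = Kᴴ * Xp * K := by
      rw [conjTranspose_mul, conjTranspose_mul, conjTranspose_conjTranspose, hXpH,
        Matrix.mul_assoc]
    rw [Matrix.trace_mul_comm]
    calc ((Kᴴ * Xp * K) * φ 1).trace = ((Kᴴ * Xp * K)ᴴ * φ 1).trace := by rw [hherm]
      _ = ((ψ (Kᴴ * Xp * K))ᴴ * 1).trace := hadj _ _
      _ = star ((ψ (Kᴴ * Xp * K)).trace) := by
          rw [Matrix.mul_one, Matrix.trace_conjTranspose]
  have tC : ((φ Zᴴ)ᴴ * Kᴴ).trace = ((ψ K)ᴴ * Z).trace := by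
    have : (φ Zᴴ)ᴴ = φ Z := by
      rw [phi_conjT φ hφ, conjTranspose_conjTranspose]
    rw [this, Matrix.trace_mul_comm]
    exact hadj K Z
  have tB : (φ Zᴴ * K).trace = star (((ψ K)ᴴ * Z).trace) := by
    have h1 : star ((φ Zᴴ * K).trace) = ((ψ K)ᴴ * Z).trace := by
      rw [← Matrix.trace_conjTranspose, conjTranspose_mul]
      have : (φ Zᴴ)ᴴ = φ Z := by
        rw [phi_conjT φ hφ, conjTranspose_conjTranspose]
      rw [this]
      exact hadj K Z
    rw [← h1, star_star]
  have tD : (φ (Z * Zᴴ) * X).trace = (Zᴴ * (ψ X) * Z).trace := by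
    rw [Matrix.trace_mul_comm]
    calc (X * φ (Z * Zᴴ)).trace = (Xᴴ * φ (Z * Zᴴ)).trace := by rw [hX.1.eq]
      _ = ((ψ X)ᴴ * (Z * Zᴴ)).trace := hadj _ _
      _ = ((ψ X) * (Z * Zᴴ)).trace := by
          rw [← psi_conjT φ ψ hφ hadj, hX.1.eq]
      _ = (Zᴴ * (ψ X) * Z).trace := by
          rw [← Matrix.mul_assoc, Matrix.trace_mul_comm, ← Matrix.mul_assoc]
  rw [Matrix.trace_add, Matrix.trace_add, Matrix.mul_neg, Matrix.mul_neg, Matrix.trace_neg,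
    Matrix.trace_neg, tA, tB, tC, tD] at hre
  simp only [Complex.add_re, Complex.sub_re, Complex.neg_re, Complex.conj_re,
    RCLike.star_def] at hre ⊢
  linarith

end Maps

lemma vecMulVec_conjT (a b : k → ℂ) : (vecMulVec a b)ᴴ = vecMulVec (star b) (star a) := by
  ext i j
  simp [vecMulVec_apply, conjTranspose_apply, mul_comm]

lemma mul_vecMulVec (M : Matrix k k ℂ) (a b : k → ℂ) :
    M * vecMulVec a b = vecMulVec (M *ᵥ a) b := by
  ext i j
  simp only [Matrix.mul_apply, vecMulVec_apply, Matrix.mulVec, dotProduct,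
    Finset.sum_mul]
  congr 1; ext l; ring

lemma vecMulVec_mulVec (a b y : k → ℂ) :
    vecMulVec a b *ᵥ y = (b ⬝ᵥ y) • a := by
  funext i
  simp only [Matrix.mulVec, dotProduct, vecMulVec_apply, Pi.smul_apply, smul_eq_mul,
    Finset.sum_mul, Finset.mul_sum]
  congr 1; ext l; ring

lemma vecMulVec_mul_vecMulVec (a b c d : k → ℂ) :
    vecMulVec a b * vecMulVec c d = (b ⬝ᵥ c) • vecMulVec a d := by
  rw [mul_vecMulVec, vecMulVec_mulVec]
  ext i j
  simp [vecMulVec_apply, Pi.smul_apply, smul_eq_mul]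
  ring

lemma star_dot (M : Matrix k k ℂ) (x y : k → ℂ) :
    star (star x ⬝ᵥ M *ᵥ y) = star y ⬝ᵥ Mᴴ *ᵥ x := by
  rw [← star_dotProduct, star_mulVec, ← Matrix.dotProduct_mulVec]

lemma psd_re_dot (M : Matrix k k ℂ) (hM : M.PosSemidef) (x : k → ℂ) :
    0 ≤ (star x ⬝ᵥ M *ᵥ x).re := by
  have := (Complex.le_def.mp (hM.dotProduct_mulVec_nonneg x)).1
  simpa using this

end SchwarzAux

open SchwarzAux SchwarzAux.Maps

theorem isGenSchwarz_iff_tracial_ineq {n m : ℕ}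
    (φ : Matrix (Fin n) (Fin n) ℂ →ₗ[ℂ] Matrix (Fin m) (Fin m) ℂ)
    (hφ : ∀ X : Matrix (Fin n) (Fin n) ℂ, X.PosSemidef → (φ X).PosSemidef)
    (ψ : Matrix (Fin m) (Fin m) ℂ →ₗ[ℂ] Matrix (Fin n) (Fin n) ℂ)
    (hadj : ∀ (A : Matrix (Fin m) (Fin m) ℂ) (B : Matrix (Fin n) (Fin n) ℂ),
      (Aᴴ * φ B).trace = ((ψ A)ᴴ * B).trace) :
    IsGenSchwarz φ ↔
      ∀ (K X : Matrix (Fin m) (Fin m) ℂ)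
        (Xp : Matrix (Fin m) (Fin m) ℂ) (ψXp : Matrix (Fin n) (Fin n) ℂ),
        X.PosSemidef →
        LinearMap.ker X.mulVecLin ≤ LinearMap.ker Kᴴ.mulVecLin →
        IsMoorePenroseInv X Xp → IsMoorePenroseInv (ψ X) ψXp →
        ((ψ K)ᴴ * ψXp * ψ K).trace.re ≤ (ψ (Kᴴ * Xp * K)).trace.re := by
  constructor
  · -- forward direction
    intro hS K X Xp ψXp hX hker hmpX hmpψX
    have hXpH : Xpᴴ = Xp := mp_conjTranspose hX.1 hmpX
    have hker' : ∀ y, X *ᵥ y = 0 → Kᴴ *ᵥ y = 0 := by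
      intro y hy
      have h1 : y ∈ LinearMap.ker X.mulVecLin := by
        rw [LinearMap.mem_ker, Matrix.mulVecLin_apply]; exact hy
      have h2 := hker h1
      rwa [LinearMap.mem_ker, Matrix.mulVecLin_apply] at h2
    have hc : X * Xp * K = K := cancel hX.1 hmpX hker'
    have hψX : (ψ X).PosSemidef := psi_pos φ ψ hφ hadj hX
    have hψXpH : ψXpᴴ = ψXp := mp_conjTranspose hψX.1 hmpψX
    have hcore := core φ ψ hφ hadj hS hX hmpX hXpH hc (ψXp * ψ K)
    have E1 : (ψ K)ᴴ * (ψXp * ψ K) = (ψ K)ᴴ * ψXp * ψ K := (Matrix.mul_assoc _ _ _).symm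
    have E2 : (ψXp * ψ K)ᴴ * (ψ X) * (ψXp * ψ K) = (ψ K)ᴴ * ψXp * ψ K := by
      rw [conjTranspose_mul, hψXpH]
      calc (ψ K)ᴴ * ψXp * ψ X * (ψXp * ψ K)
          = (ψ K)ᴴ * (ψXp * ψ X * ψXp) * ψ K := by noncomm_ring
        _ = (ψ K)ᴴ * ψXp * ψ K := by rw [hmpψX.2.1]
    rw [E1, E2] at hcore
    linarith
  · -- backward direction
    intro hT L
    have hA1 : (φ 1).PosSemidef := hφ _ Matrix.PosSemidef.one
    have hDLL : (φ (Lᴴ * L)).PosSemidef := hφ _ (posSemidef_conjTranspose_mul_self L)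
    have hblockherm : (fromBlocks (φ 1) (φ L) (φ L)ᴴ (φ (Lᴴ * L))).IsHermitian := by
      show (fromBlocks (φ 1) (φ L) (φ L)ᴴ (φ (Lᴴ * L)))ᴴ = _
      rw [fromBlocks_conjTranspose, conjTranspose_conjTranspose, hA1.1.eq, hDLL.1.eq]
    refine Matrix.PosSemidef.of_dotProduct_mulVec_nonneg ?_ ?_
    · exact hblockherm
    intro x
    set u : Fin m → ℂ := x ∘ Sum.inl with hu
    set v : Fin m → ℂ := x ∘ Sum.inr with hv
    have hx : x = Sum.elim u v := by funext i; cases i <;> rfl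
    have hstarx : star (Sum.elim u v) = Sum.elim (star u) (star v) := by
      funext i; cases i <;> rfl
    have hquad : star x ⬝ᵥ ((fromBlocks (φ 1) (φ L) (φ L)ᴴ (φ (Lᴴ * L))) *ᵥ x)
        = star u ⬝ᵥ (φ 1 *ᵥ u) + star u ⬝ᵥ (φ L *ᵥ v) + (star v ⬝ᵥ ((φ L)ᴴ *ᵥ u)
          + star v ⬝ᵥ (φ (Lᴴ * L) *ᵥ v)) := by
      rw [hx, hstarx, fromBlocks_mulVec, sumElim_dotProduct_sumElim, dotProduct_add,
        dotProduct_add]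
      simp only [Sum.elim_comp_inl, Sum.elim_comp_inr]
    set Q : ℂ := star x ⬝ᵥ ((fromBlocks (φ 1) (φ L) (φ L)ᴴ (φ (Lᴴ * L))) *ᵥ x) with hQ
    -- the quadratic form is real
    have hQreal : Q.im = 0 := by
      have h1 : star Q = Q := by
        rw [hQ, star_dot, hblockherm.eq]
      have := congrArg Complex.im h1
      simp only [Complex.star_def, Complex.conj_im] at this
      linarith
    -- cross terms conjugate
    have hcross : (star u ⬝ᵥ (φ L *ᵥ v)).re = (star v ⬝ᵥ ((φ L)ᴴ *ᵥ u)).re := by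
      have := star_dot (φ L) u v
      have h2 := congrArg Complex.re this
      simp only [Complex.star_def, Complex.conj_re] at h2
      linarith [h2]
    -- main ε-inequality
    set C : ℝ := (φ (Lᴴ * L)).trace.re with hC
    have hCnn : 0 ≤ C := by
      have := (Complex.le_def.mp (trace_psd_nonneg hDLL)).1
      simpa using this
    have hbound : ∀ ε : ℝ, 0 < ε →
        -(2 * (star v ⬝ᵥ ((φ L)ᴴ *ᵥ u)).re)
          ≤ (star u ⬝ᵥ (φ 1 *ᵥ u)).re + (star v ⬝ᵥ (φ (Lᴴ * L) *ᵥ v)).re + ε * C := by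
      intro ε hε
      set K : Matrix (Fin m) (Fin m) ℂ := -(vecMulVec v (star u)) with hK
      set X : Matrix (Fin m) (Fin m) ℂ := vecMulVec v (star v) + (ε:ℂ) • 1 with hX
      have hvv : (vecMulVec v (star v)).PosSemidef := vecMulVec_psd v
      have hε1 : ((ε:ℂ) • 1 : Matrix (Fin m) (Fin m) ℂ).PosDef := by
        rw [Matrix.smul_one_eq_diagonal]
        exact Matrix.posDef_diagonal_iff.mpr fun i => Complex.zero_lt_real.mpr hε
      have hXpd : X.PosDef := Matrix.PosDef.posSemidef_add hvv hε1
      have hdet : IsUnit X.det := hXpd.det_pos.ne'.isUnit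
      have hmpX : IsMoorePenroseInv X X⁻¹ := by
        refine ⟨?_, ?_, ?_, ?_⟩
        · rw [Matrix.mul_nonsing_inv _ hdet, Matrix.one_mul]
        · rw [Matrix.nonsing_inv_mul _ hdet, Matrix.one_mul]
        · rw [Matrix.mul_nonsing_inv _ hdet, conjTranspose_one]
        · rw [Matrix.nonsing_inv_mul _ hdet, conjTranspose_one]
      have hker : LinearMap.ker X.mulVecLin ≤ LinearMap.ker Kᴴ.mulVecLin := by
        intro y hy
        rw [LinearMap.mem_ker, Matrix.mulVecLin_apply] at hy ⊢
        have hy0 : y = 0 := by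
          by_contra hne
          have := hXpd.dotProduct_mulVec_pos hne
          rw [hy, dotProduct_zero] at this
          exact lt_irrefl _ this
        rw [hy0, Matrix.mulVec_zero]
      have hψX : (ψ X).PosSemidef := psi_pos φ ψ hφ hadj hXpd.posSemidef
      obtain ⟨ψXp, hmpψ, hψXppsd⟩ := exists_mp hψX
      have key := hT K X X⁻¹ ψXp hXpd.posSemidef hker hmpX hmpψ
      -- the range condition for ψ
      have hkerψ : ∀ y, (ψ X) *ᵥ y = 0 → (ψ K)ᴴ *ᵥ y = 0 := by
        intro y hy
        have hdot : star y ⬝ᵥ (ψ X) *ᵥ y = 0 := by rw [hy, dotProduct_zero]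
        have hexp : star y ⬝ᵥ (ψ (vecMulVec v (star v))) *ᵥ y
            + (ε:ℂ) * (star y ⬝ᵥ (ψ 1) *ᵥ y) = 0 := by
          rw [← hdot, hX, map_add, LinearMap.map_smul, Matrix.add_mulVec,
            Matrix.smul_mulVec, dotProduct_add, dotProduct_smul]
          simp [smul_eq_mul]
        have ha : 0 ≤ star y ⬝ᵥ (ψ (vecMulVec v (star v))) *ᵥ y :=
          (psi_pos φ ψ hφ hadj hvv).dotProduct_mulVec_nonneg y
        have hb : 0 ≤ star y ⬝ᵥ (ψ 1) *ᵥ y :=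
          (psi_pos φ ψ hφ hadj Matrix.PosSemidef.one).dotProduct_mulVec_nonneg y
        have hεb : 0 ≤ (ε:ℂ) * (star y ⬝ᵥ (ψ 1) *ᵥ y) :=
          mul_nonneg (Complex.zero_le_real.mpr hε.le) hb
        have hzero : (ε:ℂ) * (star y ⬝ᵥ (ψ 1) *ᵥ y) = 0 := by
          have h1 : star y ⬝ᵥ (ψ (vecMulVec v (star v))) *ᵥ y = 0 ∧
              (ε:ℂ) * (star y ⬝ᵥ (ψ 1) *ᵥ y) = 0 :=
            (add_eq_zero_iff_of_nonneg ha hεb).mp hexp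
          exact h1.2
        have hb0 : star y ⬝ᵥ (ψ 1) *ᵥ y = 0 := by
          have hεne : (ε:ℂ) ≠ 0 := by
            simp only [ne_eq, Complex.ofReal_eq_zero]
            exact hε.ne'
          exact (mul_eq_zero.mp hzero).resolve_left hεne
        have hψ1y : (ψ 1) *ᵥ y = 0 :=
          ((psi_pos φ ψ hφ hadj Matrix.PosSemidef.one).dotProduct_mulVec_zero_iff y).mp hb0
        have := psi_one_ker φ ψ hφ hadj hψ1y Kᴴ
        rwa [psi_conjT φ ψ hφ hadj] at this
      have hran : ψ X * ψXp * ψ K = ψ K := cancel hψX.1 hmpψ hkerψ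
      have hranH : (ψ K)ᴴ * ψXp * ψ X = (ψ K)ᴴ := by
        have h := congrArg conjTranspose hran
        rw [conjTranspose_mul, conjTranspose_mul, hψXppsd.1.eq, hψX.1.eq] at h
        rw [Matrix.mul_assoc]
        exact h
      -- REVCORE : expansion positivity
      set Z : Matrix (Fin n) (Fin n) ℂ := Lᴴ with hZ
      set W : Matrix (Fin n) (Fin n) ℂ := ψ X * Z - ψ K with hW
      have h0 : 0 ≤ (Wᴴ * ψXp * W).trace :=
        trace_psd_nonneg (hψXppsd.conjTranspose_mul_mul_same W)
      have hexpand : Wᴴ * ψXp * W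
          = Zᴴ * (ψ X) * Z - Zᴴ * (ψ K) - (ψ K)ᴴ * Z + (ψ K)ᴴ * ψXp * (ψ K) := by
        rw [hW, conjTranspose_sub, conjTranspose_mul, hψX.1.eq]
        calc (Zᴴ * ψ X - (ψ K)ᴴ) * ψXp * (ψ X * Z - ψ K)
            = Zᴴ * (ψ X * ψXp * ψ X) * Z - Zᴴ * (ψ X * ψXp * ψ K)
              - ((ψ K)ᴴ * ψXp * ψ X) * Z + (ψ K)ᴴ * ψXp * ψ K := by noncomm_ring
          _ = Zᴴ * (ψ X) * Z - Zᴴ * (ψ K) - (ψ K)ᴴ * Z + (ψ K)ᴴ * ψXp * (ψ K) := by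
              rw [hmpψ.1, hran, hranH]
      have hrev : 2 * ((ψ K)ᴴ * Z).trace.re
          ≤ ((ψ K)ᴴ * ψXp * ψ K).trace.re + (Zᴴ * (ψ X) * Z).trace.re := by
        have hre := (Complex.le_def.mp h0).1
        rw [hexpand, Matrix.trace_add, Matrix.trace_sub, Matrix.trace_sub] at hre
        have hconj : (Zᴴ * (ψ K)).trace.re = ((ψ K)ᴴ * Z).trace.re := by
          have h1 : ((ψ K)ᴴ * Z).trace = star ((Zᴴ * ψ K).trace) := by
            rw [← Matrix.trace_conjTranspose, conjTranspose_mul, conjTranspose_conjTranspose]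
          rw [h1, Complex.star_def, Complex.conj_re]
        simp only [Complex.zero_re, Complex.add_re, Complex.sub_re] at hre
        linarith [hre, hconj]
      -- computation of the three trace quantities
      have q1 : ((ψ K)ᴴ * Z).trace = -(star v ⬝ᵥ ((φ L)ᴴ *ᵥ u)) := by
        rw [← psi_conjT φ ψ hφ hadj, hK, conjTranspose_neg, vecMulVec_conjT, star_star,
          map_neg, Matrix.neg_mul, Matrix.trace_neg, trace_psi_mul φ ψ hφ hadj, hZ,
          phi_conjT φ hφ, Matrix.trace_mul_comm, trace_mul_vecMulVec]
      have q2 : (Zᴴ * (ψ X) * Z).trace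
          = star v ⬝ᵥ (φ (Lᴴ * L) *ᵥ v) + (ε:ℂ) * (φ (Lᴴ * L)).trace := by
        have h1 : (Zᴴ * (ψ X) * Z).trace = ((ψ X) * (Z * Zᴴ)).trace := by
          rw [Matrix.mul_assoc, Matrix.trace_mul_comm, Matrix.mul_assoc]
        have h2 : Z * Zᴴ = Lᴴ * L := by rw [hZ, conjTranspose_conjTranspose]
        rw [h1, h2, trace_psi_mul φ ψ hφ hadj, hX, Matrix.add_mul, Matrix.trace_add,
          Matrix.smul_mul, Matrix.one_mul, Matrix.trace_smul, Matrix.trace_mul_comm,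
          trace_mul_vecMulVec]
        simp [smul_eq_mul]
      have q3 : (ψ (Kᴴ * X⁻¹ * K)).trace.re ≤ (star u ⬝ᵥ (φ 1 *ᵥ u)).re := by
        set sR : ℝ := (star v ⬝ᵥ v).re with hsR
        have hsnn : 0 ≤ sR := by
          have := (Complex.le_def.mp (dotProduct_star_self_nonneg v)).1
          simpa using this
        have hvs : star v ⬝ᵥ v = ((sR : ℝ) : ℂ) := by
          have him : (star v ⬝ᵥ v).im = 0 := by
            have := (Complex.le_def.mp (dotProduct_star_self_nonneg v)).2
            simpa using this.symm
          exact Complex.ext rfl (by simpa using him)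
        set c : ℝ := sR + ε with hc
        have hcpos : 0 < c := by positivity
        have hXv : X *ᵥ v = ((c : ℝ) : ℂ) • v := by
          rw [hX, Matrix.add_mulVec, SchwarzAux.vecMulVec_mulVec, Matrix.smul_mulVec,
            Matrix.one_mulVec, hvs, hc]
          push_cast
          rw [add_smul]
        have hXinv : X⁻¹ * vecMulVec v (star u) = (((c : ℝ) : ℂ))⁻¹ • vecMulVec v (star u) := by
          have h1 : X * ((((c : ℝ) : ℂ))⁻¹ • vecMulVec v (star u)) = vecMulVec v (star u) := by
            rw [Matrix.mul_smul, SchwarzAux.mul_vecMulVec, hXv]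
            have hcne : ((c : ℝ) : ℂ) ≠ 0 := by
              simp only [ne_eq, Complex.ofReal_eq_zero]
              exact hcpos.ne'
            have hsm : vecMulVec (((c : ℝ) : ℂ) • v) (star u)
                = ((c : ℝ) : ℂ) • vecMulVec v (star u) := by
              ext i j
              simp only [vecMulVec_apply, Pi.smul_apply, Matrix.smul_apply, smul_eq_mul]
              ring
            rw [hsm, smul_smul, inv_mul_cancel₀ hcne, one_smul]
          calc X⁻¹ * vecMulVec v (star u)
              = X⁻¹ * (X * ((((c : ℝ) : ℂ))⁻¹ • vecMulVec v (star u))) := by rw [h1]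
            _ = (X⁻¹ * X) * ((((c : ℝ) : ℂ))⁻¹ • vecMulVec v (star u)) := by
                rw [Matrix.mul_assoc]
            _ = (((c : ℝ) : ℂ))⁻¹ • vecMulVec v (star u) := by
                rw [Matrix.nonsing_inv_mul _ hdet, Matrix.one_mul]
        have hKH : Kᴴ = -(vecMulVec u (star v)) := by
          rw [hK, conjTranspose_neg, vecMulVec_conjT, star_star]
        have hKXK : Kᴴ * X⁻¹ * K
            = (((c : ℝ) : ℂ))⁻¹ • (((sR : ℝ) : ℂ) • vecMulVec u (star u)) := by
          rw [hKH, hK, Matrix.neg_mul, Matrix.mul_neg, Matrix.neg_mul, neg_neg,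
            Matrix.mul_assoc, hXinv, Matrix.mul_smul, SchwarzAux.vecMulVec_mul_vecMulVec, hvs]
        have htr : (ψ (Kᴴ * X⁻¹ * K)).trace
            = ((sR / c : ℝ) : ℂ) * (star u ⬝ᵥ (φ 1 *ᵥ u)) := by
          have hψW : (ψ (vecMulVec u (star u))).trace = star u ⬝ᵥ (φ 1 *ᵥ u) := by
            rw [← Matrix.mul_one (ψ (vecMulVec u (star u))), trace_psi_mul φ ψ hφ hadj,
              Matrix.trace_mul_comm, trace_mul_vecMulVec]
          rw [hKXK, LinearMap.map_smul, LinearMap.map_smul, Matrix.trace_smul,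
            Matrix.trace_smul, hψW, smul_eq_mul, smul_eq_mul, ← mul_assoc]
          congr 1
          push_cast
          ring
        rw [htr]
        have hre1 : (((sR / c : ℝ) : ℂ) * (star u ⬝ᵥ (φ 1 *ᵥ u))).re
            = (sR / c) * (star u ⬝ᵥ (φ 1 *ᵥ u)).re := by
          rw [Complex.mul_re]
          simp
        rw [hre1]
        have hz : 0 ≤ (star u ⬝ᵥ (φ 1 *ᵥ u)).re := psd_re_dot _ hA1 u
        have hr1 : sR / c ≤ 1 := by
          rw [div_le_one hcpos, hc]
          linarith
        exact mul_le_of_le_one_left hz hr1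
      -- combine
      have q1re : ((ψ K)ᴴ * Z).trace.re = -((star v ⬝ᵥ ((φ L)ᴴ *ᵥ u)).re) := by
        rw [q1, Complex.neg_re]
      have q2re : (Zᴴ * (ψ X) * Z).trace.re
          = (star v ⬝ᵥ (φ (Lᴴ * L) *ᵥ v)).re + ε * C := by
        rw [q2, Complex.add_re, Complex.mul_re]
        simp [hC, hZ]
      linarith [hrev, key, q3, q1re, q2re]
    -- conclude from the ε-bound
    have hQre : Q.re = (star u ⬝ᵥ (φ 1 *ᵥ u)).re + 2 * (star v ⬝ᵥ ((φ L)ᴴ *ᵥ u)).re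
        + (star v ⬝ᵥ (φ (Lᴴ * L) *ᵥ v)).re := by
      have h := congrArg Complex.re hquad
      simp only [Complex.add_re] at h
      rw [hQ]
      linarith [h, hcross]
    have hfinal : 0 ≤ Q.re := by
      refine le_of_forall_pos_le_add fun ε hε => ?_
      have hb := hbound (ε / (C + 1)) (by positivity)
      have hd : ε / (C + 1) * (C + 1) = ε := div_mul_cancel₀ _ (by linarith)
      have hdd : 0 ≤ ε / (C + 1) := by positivity
      nlinarith [hb, hQre, hd, hdd, hCnn, hε.le]
    rw [Complex.le_def]
    constructor
    · simpa using hfinal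
    · simp [hQreal]
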